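/- For a zero-mean Gaussian sample with sample covariance S, the negative log-likelihood parameterized by the standard Cholesky factor, ℓ(L) = tr(LᵗLS) − 2 log|L|, is jointly convex on the set of lower triangular matrices with positive diagonal entries for any symmetric positive semidefinite S. -/

import Mathlib

open Matrix Finset

section Aux

lemma trace_sq_nonneg {p : ℕ} (A : Matrix (Fin p) (Fin p) ℝ) :
    0 ≤ Matrix.trace (Aᵀ * A) := by
  rw [Matrix.trace]
  refine Finset.sum_nonneg fun i _ => ?_
  simp only [Matrix.diag_apply, Matrix.mul_apply, Matrix.transpose_apply]
  exact Finset.sum_nonneg fun j _ => mul_self_nonneg _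

open scoped MatrixOrder in
lemma trace_psd_nonneg {p : ℕ} (S : Matrix (Fin p) (Fin p) ℝ) (hS : S.PosSemidef)
    (M : Matrix (Fin p) (Fin p) ℝ) : 0 ≤ Matrix.trace (Mᵀ * M * S) := by
  have hsq : (CFC.sqrt S) * (CFC.sqrt S) = S := by
    have := CFC.sq_sqrt S (Matrix.nonneg_iff_posSemidef.mpr hS)
    rwa [pow_two] at this
  have hsym : (CFC.sqrt S)ᵀ = (CFC.sqrt S) := by
    have := (Matrix.nonneg_iff_posSemidef.mp (CFC.sqrt_nonneg S)).isHermitian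
    simpa [Matrix.IsHermitian, Matrix.conjTranspose_eq_transpose_of_trivial] using this
  have : Matrix.trace (Mᵀ * M * S) = Matrix.trace ((M * (CFC.sqrt S))ᵀ * (M * (CFC.sqrt S))) :=
    calc Matrix.trace (Mᵀ * M * S) = Matrix.trace (Mᵀ * M * ((CFC.sqrt S) * (CFC.sqrt S))) := by rw [hsq]
    _ = Matrix.trace ((Mᵀ * M * (CFC.sqrt S)) * (CFC.sqrt S)) := by simp [Matrix.mul_assoc]
    _ = Matrix.trace ((CFC.sqrt S) * (Mᵀ * M * (CFC.sqrt S))) := Matrix.trace_mul_comm _ _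
    _ = Matrix.trace ((M * (CFC.sqrt S))ᵀ * (M * (CFC.sqrt S))) := by
        rw [Matrix.transpose_mul, hsym]; simp [Matrix.mul_assoc]
  rw [this]
  exact trace_sq_nonneg _

lemma convexOn_congr' {E : Type*} [AddCommMonoid E] [Module ℝ E] {s : Set E} {f g : E → ℝ}
    (hf : ConvexOn ℝ s f) (h : ∀ x ∈ s, f x = g x) : ConvexOn ℝ s g :=
  ⟨hf.1, fun x hx y hy a b ha hb hab => by
    rw [← h _ hx, ← h _ hy, ← h _ (hf.1 hx hy ha hb hab)]
    exact hf.2 hx hy ha hb hab⟩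

lemma convexOn_finset_sum {E ι : Type*} [AddCommMonoid E] [Module ℝ E] {s : Set E}
    (hs : Convex ℝ s) (t : Finset ι) (f : ι → E → ℝ)
    (hf : ∀ i ∈ t, ConvexOn ℝ s (f i)) :
    ConvexOn ℝ s (fun x => ∑ i ∈ t, f i x) := by
  classical
  induction t using Finset.cons_induction with
  | empty => simpa using convexOn_const 0 hs
  | cons i t hi ih =>
    simp only [Finset.sum_cons]
    exact (hf i (Finset.mem_cons_self _ _)).add (ih fun j hj => hf j (Finset.mem_cons_of_mem hj))

end Aux

theorem cholesky_neg_loglik_convex (p : ℕ)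
    (S : Matrix (Fin p) (Fin p) ℝ) (hS : S.PosSemidef) :
    ConvexOn ℝ
      {L : Matrix (Fin p) (Fin p) ℝ | (∀ i j : Fin p, i < j → L i j = 0) ∧ ∀ j, 0 < L j j}
      (fun L => Matrix.trace (Lᵀ * L * S) - 2 * Real.log L.det) := by
  set s : Set (Matrix (Fin p) (Fin p) ℝ) :=
    {L | (∀ i j : Fin p, i < j → L i j = 0) ∧ ∀ j, 0 < L j j} with hs_def
  -- s is convex
  have hs : Convex ℝ s := by
    intro x hx y hy a b ha hb hab
    refine ⟨fun i j hij => ?_, fun j => ?_⟩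
    · simp [Matrix.add_apply, Matrix.smul_apply, hx.1 i j hij, hy.1 i j hij]
    · simp only [Matrix.add_apply, Matrix.smul_apply, smul_eq_mul]
      rcases ha.eq_or_lt with h | h
      · have hb1 : b = 1 := by linarith
        simpa [← h, hb1] using hy.2 j
      · have h1 : 0 < a * x j j := mul_pos h (hx.2 j)
        have h2 : 0 ≤ b * y j j := mul_nonneg hb (hy.2 j).le
        linarith
  -- quadratic part is convex
  have hquad : ConvexOn ℝ s (fun L => Matrix.trace (Lᵀ * L * S)) := by
    refine ⟨hs, fun x _ y _ a b ha hb hab => ?_⟩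
    have expand : Matrix.trace ((a • x + b • y)ᵀ * (a • x + b • y) * S)
        = a^2 * Matrix.trace (xᵀ * x * S) + (a*b) * Matrix.trace (xᵀ * y * S)
          + (a*b) * Matrix.trace (yᵀ * x * S) + b^2 * Matrix.trace (yᵀ * y * S) := by
      simp only [Matrix.transpose_add, Matrix.transpose_smul, Matrix.add_mul, Matrix.mul_add,
        Matrix.smul_mul, Matrix.mul_smul, Matrix.trace_add, Matrix.trace_smul, smul_smul,
        smul_eq_mul]
      ring
    have hdiff : Matrix.trace ((x - y)ᵀ * (x - y) * S)
        = Matrix.trace (xᵀ * x * S) - Matrix.trace (xᵀ * y * S)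
          - Matrix.trace (yᵀ * x * S) + Matrix.trace (yᵀ * y * S) := by
      simp only [Matrix.transpose_sub, Matrix.sub_mul, Matrix.mul_sub, Matrix.trace_sub]
      ring
    have hnn : 0 ≤ Matrix.trace ((x - y)ᵀ * (x - y) * S) := trace_psd_nonneg S hS _
    rw [hdiff] at hnn
    simp only [smul_eq_mul, expand]
    have hb' : b = 1 - a := by linarith
    have key : a * Matrix.trace (xᵀ * x * S) + b * Matrix.trace (yᵀ * y * S)
        - (a^2 * Matrix.trace (xᵀ * x * S) + (a*b) * Matrix.trace (xᵀ * y * S)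
          + (a*b) * Matrix.trace (yᵀ * x * S) + b^2 * Matrix.trace (yᵀ * y * S))
        = a * b * (Matrix.trace (xᵀ * x * S) - Matrix.trace (xᵀ * y * S)
          - Matrix.trace (yᵀ * x * S) + Matrix.trace (yᵀ * y * S)) := by
      rw [hb']; ring
    nlinarith [mul_nonneg (mul_nonneg ha hb) hnn, key]
  -- log part
  have hlog : ∀ j : Fin p, ConvexOn ℝ s (fun L => -Real.log (L j j)) := by
    intro j
    have hconc : ConvexOn ℝ (Set.Ioi (0:ℝ)) (fun t => -Real.log t) :=
      (strictConcaveOn_log_Ioi.concaveOn).neg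
    refine ⟨hs, fun x hx y hy a b ha hb hab => ?_⟩
    have := hconc.2 (Set.mem_Ioi.mpr (hx.2 j)) (Set.mem_Ioi.mpr (hy.2 j)) ha hb hab
    simpa [Matrix.add_apply, Matrix.smul_apply, smul_eq_mul] using this
  have hsum : ConvexOn ℝ s (fun L => ∑ j : Fin p, -Real.log (L j j)) :=
    convexOn_finset_sum hs Finset.univ _ (fun j _ => hlog j)
  have hF : ConvexOn ℝ s
      (fun L => Matrix.trace (Lᵀ * L * S) + 2 * ∑ j : Fin p, -Real.log (L j j)) := by
    have h2 := hsum.smul (by norm_num : (0:ℝ) ≤ 2)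
    have := hquad.add h2
    exact convexOn_congr' this (fun L _ => by simp [Pi.smul_apply, smul_eq_mul])
  refine convexOn_congr' hF fun L hL => ?_
  have hdet : L.det = ∏ j, L j j := by
    apply Matrix.det_of_lowerTriangular
    intro i j hij
    exact hL.1 i j hij
  rw [hdet, Real.log_prod (fun j _ => (hL.2 j).ne')]
  rw [Finset.sum_neg_distrib]
  ring
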